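/- For all k ≥ r ≥ 2, the Lagrangian density of the family 𝒦_{k+1}^{(r)} satisfies π_λ(𝒦_{k+1}^{(r)}) ≤ (k)_r/k^r; that is, every 𝒦_{k+1}^{(r)}-free r-graph H satisfies λ^(1)(H) ≤ (k)_r/k^r. -/

import Mathlib

open Finset

/-- The `p`-spectral radius of the `r`-uniform hypergraph on vertex set `Fin n`
with edge set `E`: the maximum of `r! * ∑_{e ∈ E} ∏_{v ∈ e} x v` over all
vectors `x` with `‖x‖_p = 1` (equivalently `∑ |x i| ^ p = 1`). -/
noncomputable def specRad (r n : ℕ) (E : Finset (Finset (Fin n))) (p : ℝ) : ℝ :=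
  sSup { y : ℝ | ∃ x : Fin n → ℝ, (∑ i : Fin n, |x i| ^ p) = 1 ∧
    y = (Nat.factorial r : ℝ) * ∑ e ∈ E, ∏ v ∈ e, x v }

/-- The edge set of the Turán `r`-graph `T_r(n,k)`: the complete `k`-partite
`r`-graph on `Fin n` whose parts (the residue classes modulo `k`) are as equal
as possible; its edges are all `r`-sets meeting each part in at most one vertex. -/
def turanEdges (r n k : ℕ) : Finset (Finset (Fin n)) :=
  Finset.univ.filter fun e : Finset (Fin n) =>
    e.card = r ∧ ∀ u ∈ e, ∀ v ∈ e, u ≠ v → (u : ℕ) % k ≠ (v : ℕ) % k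

/-- The `r`-graph on `Fin n` with edge set `E` is isomorphic to `T_r(n,k)`. -/
def IsoToTuran (r n k : ℕ) (E : Finset (Finset (Fin n))) : Prop :=
  ∃ σ : Equiv.Perm (Fin n),
    ∀ e : Finset (Fin n), e ∈ E ↔ e.image (fun v => σ v) ∈ turanEdges r n k

/-- The `r`-graph on `Fin n` with edge set `E` can be transformed into (a copy of)
`T_r(n,k)` by adding and deleting at most `m` edges. -/
def CloseToTuran (r n k : ℕ) (E : Finset (Finset (Fin n))) (m : ℝ) : Prop :=
  ∃ σ : Equiv.Perm (Fin n),
    ((symmDiff E ((turanEdges r n k).image fun e => e.image fun v => σ v)).card : ℝ) ≤ m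

/-- `E` contains a copy of the expanded clique `H_{k+1}^{(r)}`, the `r`-graph obtained
from `K_{k+1}` by enlarging each edge with a new set of `r - 2` vertices, the enlarging
sets being pairwise disjoint and disjoint from the core. Here `c` lists the `k+1` core
vertices and `g i j` (for `i < j`) is the edge containing the core pair `{c i, c j}`. -/
def ContainsExpandedClique (r k : ℕ) {n : ℕ} (E : Finset (Finset (Fin n))) : Prop :=
  ∃ (c : Fin (k + 1) ↪ Fin n) (g : Fin (k + 1) → Fin (k + 1) → Finset (Fin n)),
    (∀ i j : Fin (k + 1), i < j →
      g i j ∈ E ∧ (g i j).card = r ∧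
      g i j ∩ Finset.univ.image (fun i => c i) = {c i, c j}) ∧
    (∀ i j i' j' : Fin (k + 1), i < j → i' < j' → (i, j) ≠ (i', j') →
      g i j ∩ g i' j' ⊆ Finset.univ.image (fun i => c i))

/-- `E` contains a copy of the generalized fan `F_{k+1}^{(r)}`, whose edges are `[r]`
together with `E_{ij} ∪ {i,j}` over all pairs `{i,j} ∈ C([k+1],2) \ C([r],2)`, where the
`E_{ij}` are pairwise disjoint `(r-2)`-sets disjoint from the core `[k+1]`. -/
def ContainsGenFan (r k : ℕ) {n : ℕ} (E : Finset (Finset (Fin n))) : Prop :=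
  ∃ (c : Fin (k + 1) ↪ Fin n) (g : Fin (k + 1) → Fin (k + 1) → Finset (Fin n)),
    ((Finset.univ.filter fun i : Fin (k + 1) => (i : ℕ) < r).image (fun i => c i) ∈ E) ∧
    (∀ i j : Fin (k + 1), i < j → ¬((i : ℕ) < r ∧ (j : ℕ) < r) →
      g i j ∈ E ∧ (g i j).card = r ∧
      g i j ∩ Finset.univ.image (fun i => c i) = {c i, c j}) ∧
    (∀ i j i' j' : Fin (k + 1), i < j → i' < j' → (i, j) ≠ (i', j') →
      ¬((i : ℕ) < r ∧ (j : ℕ) < r) → ¬((i' : ℕ) < r ∧ (j' : ℕ) < r) →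
      g i j ∩ g i' j' ⊆ Finset.univ.image (fun i => c i))

/-- `E` contains a member of the family `𝒦_t^{(r)}` as a subgraph; equivalently,
there is a `t`-set `C` of vertices (the core) every pair of which is covered by an
edge of `E`. -/
def ContainsKFam (t : ℕ) {n : ℕ} (E : Finset (Finset (Fin n))) : Prop :=
  ∃ C : Finset (Fin n), C.card = t ∧
    ∀ u ∈ C, ∀ v ∈ C, u ≠ v → ∃ e ∈ E, u ∈ e ∧ v ∈ e

/-- `E` contains a member of the family `ℱ_t^{(r)}` as a subgraph; equivalently,
there is a `t`-set `C` of vertices (the core) such that some edge of `E` lies entirely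
inside `C` and every pair of vertices of `C` is covered by an edge of `E`. -/
def ContainsFFam (t : ℕ) {n : ℕ} (E : Finset (Finset (Fin n))) : Prop :=
  ∃ C : Finset (Fin n), C.card = t ∧ (∃ e ∈ E, e ⊆ C) ∧
    ∀ u ∈ C, ∀ v ∈ C, u ≠ v → ∃ e ∈ E, u ∈ e ∧ v ∈ e

/-- `E` contains a Berge-`K_t`: distinct core vertices `c 0, …, c (t-1)` and
pairwise distinct edges `φ i j` (for `i < j`) with `{c i, c j} ⊆ φ i j`. -/
def ContainsBergeClique (t : ℕ) {n : ℕ} (E : Finset (Finset (Fin n))) : Prop :=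
  ∃ (c : Fin t ↪ Fin n) (φ : Fin t → Fin t → Finset (Fin n)),
    (∀ i j : Fin t, i < j → φ i j ∈ E ∧ c i ∈ φ i j ∧ c j ∈ φ i j) ∧
    (∀ i j i' j' : Fin t, i < j → i' < j' → (i, j) ≠ (i', j') → φ i j ≠ φ i' j')

/-- `E` (on `Fin n`) contains a copy of the hypergraph `F` (with vertices in `ℕ`). -/
def ContainsCopy {n : ℕ} (E : Finset (Finset (Fin n))) (F : Finset (Finset ℕ)) : Prop :=
  ∃ f : ℕ → Fin n, Set.InjOn f ↑(F.biUnion id) ∧ ∀ e ∈ F, e.image f ∈ E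

/-- `E` is `𝓕`-free for the family `𝓕` of hypergraphs. -/
def FamFree {n : ℕ} (E : Finset (Finset (Fin n))) (𝓕 : Set (Finset (Finset ℕ))) : Prop :=
  ∀ F ∈ 𝓕, ¬ ContainsCopy E F

/-- The Lagrangian density `π_λ(𝓕)`: the supremum of `λ^(1)(H)` over all
`𝓕`-free `r`-graphs `H`. -/
noncomputable def lagrangianDensity (r : ℕ) (𝓕 : Set (Finset (Finset ℕ))) : ℝ :=
  sSup { y : ℝ | ∃ (m : ℕ) (E : Finset (Finset (Fin m))),
    (∀ e ∈ E, e.card = r) ∧ FamFree E 𝓕 ∧ y = specRad r m E 1 }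

/-- The family `𝓕` of `r`-graphs is (edge-)stable with respect to `T_r(n,k)`. -/
def StableFamily (r k : ℕ) (𝓕 : Set (Finset (Finset ℕ))) : Prop :=
  ∀ ε : ℝ, 0 < ε → ∃ δ : ℝ, 0 < δ ∧ ∃ n₀ : ℕ, ∀ n : ℕ, n₀ ≤ n →
    ∀ E : Finset (Finset (Fin n)), (∀ e ∈ E, e.card = r) → FamFree E 𝓕 →
    (1 - δ) * ((Nat.descFactorial k r : ℝ) / (k : ℝ) ^ r) * (n.choose r : ℝ) ≤ (E.card : ℝ) →
    CloseToTuran r n k E (ε * (n.choose r : ℝ))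

/-- The family `𝓕` of `r`-graphs is spectrally stable with respect to `T_r(n,k)`,
for the given `p`. -/
def SpectrallyStableFamily (p : ℝ) (r k : ℕ) (𝓕 : Set (Finset (Finset ℕ))) : Prop :=
  ∀ ε : ℝ, 0 < ε → ∃ δ : ℝ, 0 < δ ∧ ∃ n₀ : ℕ, ∀ n : ℕ, n₀ ≤ n →
    ∀ E : Finset (Finset (Fin n)), (∀ e ∈ E, e.card = r) → FamFree E 𝓕 →
    (1 - δ) * ((Nat.descFactorial k r : ℝ) / (k : ℝ) ^ r) * (n : ℝ) ^ ((r : ℝ) * (1 - 1 / p))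
      < specRad r n E p →
    CloseToTuran r n k E (ε * (n.choose r : ℝ))

/-- The codegree of `u` and `v`: the number of edges containing both. -/
def codeg {n : ℕ} (E : Finset (Finset (Fin n))) (u v : Fin n) : ℕ :=
  (E.filter fun e => u ∈ e ∧ v ∈ e).card

/-- For a partition of `Fin n` into `k` parts given by `P : Fin n → Fin k`,
`partWeight E P = ∑_{e ∈ E} #{i : e ∩ V_i ≠ ∅}`. -/
def partWeight {n k : ℕ} (E : Finset (Finset (Fin n))) (P : Fin n → Fin k) : ℕ :=
  ∑ e ∈ E, (e.image P).card


section AuxLemmas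

open Function

variable {n : ℕ}

private lemma ratio_mono (r s k : ℕ) (hs : 0 < s) (h : s ≤ k) :
    (Nat.descFactorial s r : ℝ) / (s : ℝ) ^ r ≤ (Nat.descFactorial k r : ℝ) / (k : ℝ) ^ r := by
  have hk : 0 < k := lt_of_lt_of_le hs h
  have hs' : (0 : ℝ) < s := by exact_mod_cast hs
  have hk' : (0 : ℝ) < k := by exact_mod_cast hk
  rw [Nat.descFactorial_eq_prod_range, Nat.descFactorial_eq_prod_range]
  push_cast
  rw [show ((s : ℝ)) ^ r = ∏ _i ∈ Finset.range r, (s : ℝ) by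
        rw [Finset.prod_const, Finset.card_range],
      show ((k : ℝ)) ^ r = ∏ _i ∈ Finset.range r, (k : ℝ) by
        rw [Finset.prod_const, Finset.card_range],
      ← Finset.prod_div_distrib, ← Finset.prod_div_distrib]
  apply Finset.prod_le_prod
  · intro i _; positivity
  · intro i _
    rw [div_le_div_iff₀ hs' hk']
    have hnat : (s - i) * k ≤ (k - i) * s := by
      rcases le_total i s with h1 | h1
      · have h2 : i * s ≤ i * k := Nat.mul_le_mul_left i h
        calc (s - i) * k = s * k - i * k := by rw [Nat.sub_mul]
          _ ≤ k * s - i * s := by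
              rw [mul_comm s k]; exact Nat.sub_le_sub_left h2 _
          _ = (k - i) * s := by rw [Nat.sub_mul]
      · have : s - i = 0 := Nat.sub_eq_zero_of_le h1
        simp [this]
    exact_mod_cast hnat

private lemma sum_split_uv (𝒜 : Finset (Finset (Fin n))) (u v : Fin n)
    (g : Finset (Fin n) → ℝ) :
    𝒜.sum g = (𝒜.filter fun A => u ∈ A ∧ v ∈ A).sum g
      + (𝒜.filter fun A => u ∈ A ∧ v ∉ A).sum g
      + (𝒜.filter fun A => u ∉ A ∧ v ∈ A).sum g
      + (𝒜.filter fun A => u ∉ A ∧ v ∉ A).sum g := by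
  classical
  rw [← Finset.sum_filter_add_sum_filter_not 𝒜 (fun A => u ∈ A) g,
    ← Finset.sum_filter_add_sum_filter_not (𝒜.filter fun A => u ∈ A) (fun A => v ∈ A) g,
    ← Finset.sum_filter_add_sum_filter_not (𝒜.filter fun A => u ∉ A) (fun A => v ∈ A) g,
    Finset.filter_filter, Finset.filter_filter, Finset.filter_filter, Finset.filter_filter]
  ring

/-- Averaging the weights at two vertices does not decrease the complete `r`-graph sum. -/
private lemma swap_le (r : ℕ) (T : Finset (Fin n)) {u v : Fin n} (hu : u ∈ T) (hv : v ∈ T)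
    (huv : u ≠ v) (y : Fin n → ℝ) (h0 : ∀ i, 0 ≤ y i) :
    (T.powersetCard r).sum (fun A => ∏ w ∈ A, y w) ≤
      (T.powersetCard r).sum (fun A => ∏ w ∈ A,
        Function.update (Function.update y u ((y u + y v) / 2)) v ((y u + y v) / 2) w) := by
  classical
  set c : ℝ := (y u + y v) / 2 with hc
  set y' : Fin n → ℝ := Function.update (Function.update y u c) v c with hy'def
  have hy'u : y' u = c := by
    rw [hy'def, Function.update_of_ne huv, Function.update_self]
  have hy'v : y' v = c := by rw [hy'def, Function.update_self]
  have hy'w : ∀ w, w ≠ u → w ≠ v → y' w = y w := fun w h1 h2 => by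
    rw [hy'def, Function.update_of_ne h2, Function.update_of_ne h1]
  rw [sum_split_uv (T.powersetCard r) u v (fun A => ∏ w ∈ A, y w),
    sum_split_uv (T.powersetCard r) u v (fun A => ∏ w ∈ A, y' w)]
  set 𝒜uv := (T.powersetCard r).filter (fun A => u ∈ A ∧ v ∈ A) with h𝒜uv
  set 𝒜u := (T.powersetCard r).filter (fun A => u ∈ A ∧ v ∉ A) with h𝒜u
  set 𝒜v := (T.powersetCard r).filter (fun A => u ∉ A ∧ v ∈ A) with h𝒜v
  set 𝒜o := (T.powersetCard r).filter (fun A => u ∉ A ∧ v ∉ A) with h𝒜o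
  have hextract : ∀ (z : Fin n → ℝ), (∀ w, w ≠ u → w ≠ v → z w = y w) →
      ∀ (𝒜 : Finset (Finset (Fin n))) (a : Fin n),
      (∀ A ∈ 𝒜, a ∈ A ∧ (∀ w ∈ A.erase a, w ≠ u ∧ w ≠ v)) →
      𝒜.sum (fun A => ∏ w ∈ A, z w) = z a * ∑ A ∈ 𝒜, ∏ w ∈ A.erase a, y w := by
    intro z hz 𝒜 a h
    rw [Finset.mul_sum]
    apply Finset.sum_congr rfl
    intro A hA
    rw [← Finset.mul_prod_erase A z (h A hA).1]
    congr 1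
    apply Finset.prod_congr rfl
    intro w hw
    exact hz w ((h A hA).2 w hw).1 ((h A hA).2 w hw).2
  have hcondu : ∀ A ∈ 𝒜u, u ∈ A ∧ (∀ w ∈ A.erase u, w ≠ u ∧ w ≠ v) := by
    intro A hA
    have h1 := (Finset.mem_filter.1 hA).2
    refine ⟨h1.1, fun w hw => ⟨(Finset.mem_erase.1 hw).1, ?_⟩⟩
    intro hwv
    exact h1.2 (hwv ▸ (Finset.mem_erase.1 hw).2)
  have hcondv : ∀ A ∈ 𝒜v, v ∈ A ∧ (∀ w ∈ A.erase v, w ≠ u ∧ w ≠ v) := by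
    intro A hA
    have h1 := (Finset.mem_filter.1 hA).2
    refine ⟨h1.2, fun w hw => ⟨?_, (Finset.mem_erase.1 hw).1⟩⟩
    intro hwu
    exact h1.1 (hwu ▸ (Finset.mem_erase.1 hw).2)
  have hyy : ∀ w, w ≠ u → w ≠ v → y w = y w := fun _ _ _ => rfl
  have hu1 := hextract y hyy 𝒜u u hcondu
  have hu2 := hextract y' hy'w 𝒜u u hcondu
  have hv1 := hextract y hyy 𝒜v v hcondv
  have hv2 := hextract y' hy'w 𝒜v v hcondv
  have hboth : 𝒜uv.sum (fun A => ∏ w ∈ A, y w) ≤ 𝒜uv.sum (fun A => ∏ w ∈ A, y' w) := by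
    apply Finset.sum_le_sum
    intro A hA
    have hA' := Finset.mem_filter.1 hA
    have hAu : u ∈ A := hA'.2.1
    have hAv : v ∈ A.erase u := Finset.mem_erase.2 ⟨Ne.symm huv, hA'.2.2⟩
    rw [← Finset.mul_prod_erase A y hAu, ← Finset.mul_prod_erase _ y hAv,
      ← Finset.mul_prod_erase A y' hAu, ← Finset.mul_prod_erase _ y' hAv, hy'u, hy'v]
    have hrest : ∏ w ∈ (A.erase u).erase v, y' w = ∏ w ∈ (A.erase u).erase v, y w := by
      apply Finset.prod_congr rfl
      intro w hw
      have h2 := Finset.mem_erase.1 hw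
      have h3 := Finset.mem_erase.1 h2.2
      exact hy'w w h3.1 h2.1
    rw [hrest, hc]
    have hp : (0 : ℝ) ≤ ∏ w ∈ (A.erase u).erase v, y w :=
      Finset.prod_nonneg fun w _ => h0 w
    nlinarith [sq_nonneg (y u - y v), hp]
  have ho : 𝒜o.sum (fun A => ∏ w ∈ A, y' w) = 𝒜o.sum (fun A => ∏ w ∈ A, y w) := by
    apply Finset.sum_congr rfl
    intro A hA
    have h1 := (Finset.mem_filter.1 hA).2
    exact Finset.prod_congr rfl fun w hw =>
      hy'w w (fun h => h1.1 (h ▸ hw)) (fun h => h1.2 (h ▸ hw))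
  have hQQ : (∑ A ∈ 𝒜u, ∏ w ∈ A.erase u, y w) = ∑ A ∈ 𝒜v, ∏ w ∈ A.erase v, y w := by
    apply Finset.sum_nbij' (fun A => insert v (A.erase u)) (fun B => insert u (B.erase v))
    · intro A hA
      have h1 := Finset.mem_filter.1 hA
      obtain ⟨hsub, hcard⟩ := Finset.mem_powersetCard.1 h1.1
      have hAu : u ∈ A := h1.2.1
      have hAv : v ∉ A := h1.2.2
      have hvnot : v ∉ A.erase u := fun h => hAv (Finset.mem_of_mem_erase h)
      refine Finset.mem_filter.2 ⟨Finset.mem_powersetCard.2 ⟨?_, ?_⟩, ?_, ?_⟩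
      · intro w hw
        rcases Finset.mem_insert.1 hw with h | h
        · exact h ▸ hv
        · exact hsub (Finset.mem_of_mem_erase h)
      · rw [Finset.card_insert_of_notMem hvnot, Finset.card_erase_of_mem hAu, hcard]
        have : 1 ≤ r := by
          rw [← hcard]; exact Finset.card_pos.2 ⟨u, hAu⟩
        omega
      · intro h
        rcases Finset.mem_insert.1 h with h | h
        · exact huv h
        · exact (Finset.mem_erase.1 h).1 rfl
      · exact Finset.mem_insert_self v _
    · intro B hB
      have h1 := Finset.mem_filter.1 hB
      obtain ⟨hsub, hcard⟩ := Finset.mem_powersetCard.1 h1.1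
      have hBv : v ∈ B := h1.2.2
      have hBu : u ∉ B := h1.2.1
      have hunot : u ∉ B.erase v := fun h => hBu (Finset.mem_of_mem_erase h)
      refine Finset.mem_filter.2 ⟨Finset.mem_powersetCard.2 ⟨?_, ?_⟩, ?_, ?_⟩
      · intro w hw
        rcases Finset.mem_insert.1 hw with h | h
        · exact h ▸ hu
        · exact hsub (Finset.mem_of_mem_erase h)
      · rw [Finset.card_insert_of_notMem hunot, Finset.card_erase_of_mem hBv, hcard]
        have : 1 ≤ r := by
          rw [← hcard]; exact Finset.card_pos.2 ⟨v, hBv⟩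
        omega
      · exact Finset.mem_insert_self u _
      · intro h
        rcases Finset.mem_insert.1 h with h | h
        · exact huv h.symm
        · exact (Finset.mem_erase.1 h).1 rfl
    · intro A hA
      have h1 := Finset.mem_filter.1 hA
      have hAu : u ∈ A := h1.2.1
      have hAv : v ∉ A := h1.2.2
      have hvnot : v ∉ A.erase u := fun h => hAv (Finset.mem_of_mem_erase h)
      rw [Finset.erase_insert hvnot, Finset.insert_erase hAu]
    · intro B hB
      have h1 := Finset.mem_filter.1 hB
      have hBv : v ∈ B := h1.2.2
      have hBu : u ∉ B := h1.2.1
      have hunot : u ∉ B.erase v := fun h => hBu (Finset.mem_of_mem_erase h)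
      rw [Finset.erase_insert hunot, Finset.insert_erase hBv]
    · intro A hA
      have h1 := Finset.mem_filter.1 hA
      have hAu : u ∈ A := h1.2.1
      have hvnot : v ∉ A.erase u := fun h => h1.2.2 (Finset.mem_of_mem_erase h)
      rw [Finset.erase_insert hvnot]
  rw [hu1, hu2, hv1, hv2, ho, hy'u, hy'v, hQQ, hc]
  linarith [hboth]

/-- Maclaurin-type bound: on the simplex supported on `T`, the elementary symmetric
sum of degree `r` is at most its value at the uniform weighting. Proved by a
compactness/smoothing argument. -/
private lemma complete_max (r : ℕ) (T : Finset (Fin n)) (y : Fin n → ℝ)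
    (h0 : ∀ i, 0 ≤ y i) (hz : ∀ i ∉ T, y i = 0) (h1 : ∑ i ∈ T, y i = 1) :
    ∑ A ∈ T.powersetCard r, ∏ w ∈ A, y w ≤ (T.card.choose r : ℝ) / (T.card : ℝ) ^ r := by
  classical
  have hTne : T.Nonempty := by
    by_contra h
    rw [Finset.not_nonempty_iff_eq_empty] at h
    rw [h] at h1
    simp at h1
  have hTcard : 0 < T.card := Finset.card_pos.2 hTne
  have hTcard' : (0 : ℝ) < T.card := by exact_mod_cast hTcard
  set D : Set (Fin n → ℝ) :=
    {z | (∀ i, 0 ≤ z i) ∧ (∀ i ∉ T, z i = 0) ∧ ∑ i ∈ T, z i = 1} with hD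
  set F : (Fin n → ℝ) → ℝ := fun z => ∑ A ∈ T.powersetCard r, ∏ w ∈ A, z w with hF
  have hFcont : Continuous F := by
    apply continuous_finset_sum
    intro A _
    exact continuous_finset_prod _ fun w _ => continuous_apply w
  have hDclosed : IsClosed D := by
    have c1 : IsClosed {z : Fin n → ℝ | ∀ i, 0 ≤ z i} := by
      have : {z : Fin n → ℝ | ∀ i, 0 ≤ z i} = ⋂ i, {z | 0 ≤ z i} := by
        ext z; simp [Set.mem_iInter]
      rw [this]
      exact isClosed_iInter fun i => isClosed_le continuous_const (continuous_apply i)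
    have c2 : IsClosed {z : Fin n → ℝ | ∀ i ∉ T, z i = 0} := by
      have : {z : Fin n → ℝ | ∀ i ∉ T, z i = 0}
          = ⋂ i ∈ {i : Fin n | i ∉ T}, {z : Fin n → ℝ | z i = 0} := by
        ext z; simp [Set.mem_iInter]
      rw [this]
      exact isClosed_biInter fun i _ => isClosed_eq (continuous_apply i) continuous_const
    have c3 : IsClosed {z : Fin n → ℝ | ∑ i ∈ T, z i = 1} := by
      exact isClosed_eq (continuous_finset_sum _ fun i _ => continuous_apply i) continuous_const
    have : D = {z : Fin n → ℝ | ∀ i, 0 ≤ z i} ∩ ({z | ∀ i ∉ T, z i = 0} ∩ {z | ∑ i ∈ T, z i = 1}) := by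
      ext z; simp [hD, Set.mem_inter_iff]
    rw [this]
    exact c1.inter (c2.inter c3)
  have hDbdd : Bornology.IsBounded D := by
    apply (Metric.isBounded_closedBall (x := (0 : Fin n → ℝ)) (r := 1)).subset
    intro z hz'
    obtain ⟨hz0, hzT, hzs⟩ := hz'
    rw [Metric.mem_closedBall, dist_zero_right]
    rw [pi_norm_le_iff_of_nonneg (by norm_num)]
    intro i
    rw [Real.norm_eq_abs, abs_of_nonneg (hz0 i)]
    by_cases hi : i ∈ T
    · calc z i ≤ ∑ j ∈ T, z j := Finset.single_le_sum (fun j _ => hz0 j) hi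
        _ = 1 := hzs
    · rw [hzT i hi]; norm_num
  have hDcompact : IsCompact D := Metric.isCompact_of_isClosed_isBounded hDclosed hDbdd
  have hDne : D.Nonempty := ⟨y, h0, hz, h1⟩
  obtain ⟨y₁, hy₁D, hy₁max⟩ := hDcompact.exists_isMaxOn hDne hFcont.continuousOn
  set M : ℝ := F y₁ with hM
  set D' : Set (Fin n → ℝ) := D ∩ {z | F z = M} with hD'
  have hD'compact : IsCompact D' :=
    hDcompact.inter_right (isClosed_eq hFcont continuous_const)
  have hD'ne : D'.Nonempty := ⟨y₁, hy₁D, rfl⟩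
  set G : (Fin n → ℝ) → ℝ := fun z => ∑ i, (z i) ^ 2 with hG
  have hGcont : Continuous G :=
    continuous_finset_sum _ fun i _ => (continuous_apply i).pow 2
  obtain ⟨y₂, hy₂D', hy₂min⟩ := hD'compact.exists_isMinOn hD'ne hGcont.continuousOn
  obtain ⟨hy₂D, hy₂Fmem⟩ := hy₂D'
  have hy₂F : F y₂ = M := hy₂Fmem
  obtain ⟨hy₂0, hy₂T, hy₂s⟩ := hy₂D
  -- all coordinates of y₂ on T are equal
  have hconst : ∀ u ∈ T, ∀ v ∈ T, y₂ u = y₂ v := by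
    by_contra hcon
    push_neg at hcon
    obtain ⟨u, hu, v, hv, hne⟩ := hcon
    have huv : u ≠ v := fun h => hne (h ▸ rfl)
    set c : ℝ := (y₂ u + y₂ v) / 2 with hc
    set y₃ : Fin n → ℝ := Function.update (Function.update y₂ u c) v c with hy₃def
    have hy₃u : y₃ u = c := by
      rw [hy₃def, Function.update_of_ne huv, Function.update_self]
    have hy₃v : y₃ v = c := by rw [hy₃def, Function.update_self]
    have hy₃w : ∀ w, w ≠ u → w ≠ v → y₃ w = y₂ w := fun w hwu hwv => by
      rw [hy₃def, Function.update_of_ne hwv, Function.update_of_ne hwu]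
    have hc0 : 0 ≤ c := by
      rw [hc]; have := hy₂0 u; have := hy₂0 v; linarith
    have hy₃D : y₃ ∈ D := by
      refine ⟨?_, ?_, ?_⟩
      · intro i
        by_cases h1' : i = v
        · rw [h1', hy₃v]; exact hc0
        · by_cases h2' : i = u
          · rw [h2', hy₃u]; exact hc0
          · rw [hy₃w i h2' h1']; exact hy₂0 i
      · intro i hi
        have hiu : i ≠ u := fun h => hi (h ▸ hu)
        have hiv : i ≠ v := fun h => hi (h ▸ hv)
        rw [hy₃w i hiu hiv]; exact hy₂T i hi
      · have hvTe : v ∈ T.erase u := Finset.mem_erase.2 ⟨Ne.symm huv, hv⟩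
        rw [← Finset.add_sum_erase T y₃ hu, ← Finset.add_sum_erase _ y₃ hvTe]
        rw [← Finset.add_sum_erase T y₂ hu, ← Finset.add_sum_erase _ y₂ hvTe] at hy₂s
        have htail : ∑ i ∈ (T.erase u).erase v, y₃ i = ∑ i ∈ (T.erase u).erase v, y₂ i := by
          apply Finset.sum_congr rfl
          intro i hi
          have h2 := Finset.mem_erase.1 hi
          have h3 := Finset.mem_erase.1 h2.2
          exact hy₃w i h3.1 h2.1
        rw [htail, hy₃u, hy₃v, hc]
        linarith [hy₂s]
    have hy₃F : F y₂ ≤ F y₃ := swap_le r T hu hv huv y₂ hy₂0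
    have hy₃F' : F y₃ = M := le_antisymm (hy₁max hy₃D) (hy₂F ▸ hy₃F)
    have hy₃D' : y₃ ∈ D' := ⟨hy₃D, hy₃F'⟩
    have hGles : G y₂ ≤ G y₃ := hy₂min hy₃D'
    -- but G y₃ < G y₂
    have hvu : v ∈ (Finset.univ : Finset (Fin n)).erase u :=
      Finset.mem_erase.2 ⟨Ne.symm huv, Finset.mem_univ v⟩
    have hGsum : ∀ z : Fin n → ℝ, G z
        = z u ^ 2 + (z v ^ 2 + ∑ i ∈ (Finset.univ.erase u).erase v, z i ^ 2) := by
      intro z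
      show ∑ i : Fin n, z i ^ 2 = _
      rw [← Finset.add_sum_erase Finset.univ (fun i => z i ^ 2) (Finset.mem_univ u),
        ← Finset.add_sum_erase _ (fun i => z i ^ 2) hvu]
    have htail2 : ∑ i ∈ (Finset.univ.erase u).erase v, y₃ i ^ 2
        = ∑ i ∈ (Finset.univ.erase u).erase v, y₂ i ^ 2 := by
      apply Finset.sum_congr rfl
      intro i hi
      have h2 := Finset.mem_erase.1 hi
      have h3 := Finset.mem_erase.1 h2.2
      rw [hy₃w i h3.1 h2.1]
    have hlt : G y₃ < G y₂ := by
      rw [hGsum y₃, hGsum y₂, htail2, hy₃u, hy₃v, hc]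
      have hsq : 0 < (y₂ u - y₂ v) ^ 2 := by
        have h4 : y₂ u - y₂ v ≠ 0 := sub_ne_zero.2 hne
        positivity
      nlinarith [hsq]
    linarith
  -- hence y₂ is uniform on T
  obtain ⟨i₀, hi₀⟩ := hTne
  have huniform : ∀ i ∈ T, y₂ i = 1 / T.card := by
    have hsum : ∑ i ∈ T, y₂ i = T.card * y₂ i₀ := by
      rw [Finset.sum_congr rfl fun i hi => hconst i hi i₀ hi₀, Finset.sum_const,
        nsmul_eq_mul]
    intro i hi
    rw [hconst i hi i₀ hi₀]
    rw [hsum] at hy₂s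
    field_simp
    linarith [hy₂s]
  have hFy₂ : F y₂ = (T.card.choose r : ℝ) / (T.card : ℝ) ^ r := by
    show (∑ A ∈ T.powersetCard r, ∏ w ∈ A, y₂ w) = _
    have : ∀ A ∈ T.powersetCard r, ∏ w ∈ A, y₂ w = (1 / (T.card : ℝ)) ^ r := by
      intro A hA
      obtain ⟨hsub, hcard⟩ := Finset.mem_powersetCard.1 hA
      rw [Finset.prod_congr rfl fun w hw => huniform w (hsub hw), Finset.prod_const, hcard]
    rw [Finset.sum_congr rfl this, Finset.sum_const, Finset.card_powersetCard,
      nsmul_eq_mul, one_div, inv_pow]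
    field_simp
  calc F y ≤ M := hy₁max ⟨h0, hz, h1⟩
    _ = F y₂ := hy₂F.symm
    _ = (T.card.choose r : ℝ) / (T.card : ℝ) ^ r := hFy₂

/-- Bound in the case where the support of `y` has at most `k` elements. -/
private lemma small_bound (k r : ℕ) (E : Finset (Finset (Fin n)))
    (hunif : ∀ e ∈ E, e.card = r) (y : Fin n → ℝ) (h0 : ∀ i, 0 ≤ y i)
    (h1 : ∑ i, y i = 1)
    (hS : (Finset.univ.filter fun i => y i ≠ 0).card ≤ k) :
    (Nat.factorial r : ℝ) * ∑ e ∈ E, ∏ w ∈ e, y w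
      ≤ (Nat.descFactorial k r : ℝ) / (k : ℝ) ^ r := by
  classical
  set S := Finset.univ.filter (fun i => y i ≠ 0) with hSdef
  have hzero : ∀ i ∉ S, y i = 0 := by
    intro i hi
    by_contra h
    exact hi (Finset.mem_filter.2 ⟨Finset.mem_univ i, h⟩)
  have hsumS : ∑ i ∈ S, y i = 1 := by
    rw [← h1]
    exact Finset.sum_subset (Finset.subset_univ S) fun i _ hi => hzero i hi
  have hSpos : 0 < S.card := by
    rcases Finset.eq_empty_or_nonempty S with h | h
    · rw [h] at hsumS; simp at hsumS
    · exact Finset.card_pos.2 h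
  have hEstep : ∑ e ∈ E, ∏ w ∈ e, y w ≤ ∑ A ∈ S.powersetCard r, ∏ w ∈ A, y w := by
    rw [← Finset.sum_filter_add_sum_filter_not E (fun e => e ⊆ S) (fun e => ∏ w ∈ e, y w)]
    have h2 : ∑ e ∈ E.filter (fun e => ¬ e ⊆ S), ∏ w ∈ e, y w = 0 := by
      apply Finset.sum_eq_zero
      intro e he
      obtain ⟨heE, hns⟩ := Finset.mem_filter.1 he
      obtain ⟨w, hw, hw'⟩ := Finset.not_subset.1 hns
      exact Finset.prod_eq_zero hw (hzero w hw')
    rw [h2, add_zero]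
    apply Finset.sum_le_sum_of_subset_of_nonneg
    · intro e he
      obtain ⟨heE, hs⟩ := Finset.mem_filter.1 he
      exact Finset.mem_powersetCard.2 ⟨hs, hunif e heE⟩
    · intro A _ _
      exact Finset.prod_nonneg fun w _ => h0 w
  have hcm := complete_max r S y h0 hzero hsumS
  have hfact : (0 : ℝ) ≤ (Nat.factorial r : ℝ) := by positivity
  have hdesc : ∀ m : ℕ, (Nat.factorial r : ℝ) * (m.choose r : ℝ) = (Nat.descFactorial m r : ℝ) := by
    intro m
    rw [Nat.descFactorial_eq_factorial_mul_choose]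
    push_cast
    ring
  calc (Nat.factorial r : ℝ) * ∑ e ∈ E, ∏ w ∈ e, y w
      ≤ (Nat.factorial r : ℝ) * ((S.card.choose r : ℝ) / (S.card : ℝ) ^ r) := by
        apply mul_le_mul_of_nonneg_left _ hfact
        exact le_trans hEstep hcm
    _ = (Nat.descFactorial S.card r : ℝ) / (S.card : ℝ) ^ r := by
        rw [← hdesc S.card]; ring
    _ ≤ (Nat.descFactorial k r : ℝ) / (k : ℝ) ^ r := ratio_mono r S.card k hSpos hS

/-- Compression step: if no edge contains both `u` and `v`, moving all weight from
`v` to `u` (when `u`'s link is at least `v`'s) does not decrease the sum. -/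
private lemma compress_le (E : Finset (Finset (Fin n))) {u v : Fin n} (huv : u ≠ v)
    (hcov : ∀ e ∈ E, ¬(u ∈ e ∧ v ∈ e)) (y : Fin n → ℝ) (h0 : ∀ i, 0 ≤ y i)
    (hAB : ∑ e ∈ E.filter (fun e => u ∉ e ∧ v ∈ e), ∏ w ∈ e.erase v, y w
         ≤ ∑ e ∈ E.filter (fun e => u ∈ e ∧ v ∉ e), ∏ w ∈ e.erase u, y w) :
    ∑ e ∈ E, ∏ w ∈ e, y w ≤
      ∑ e ∈ E, ∏ w ∈ e, Function.update (Function.update y u (y u + y v)) v 0 w := by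
  classical
  set y' : Fin n → ℝ := Function.update (Function.update y u (y u + y v)) v 0 with hy'def
  have hy'u : y' u = y u + y v := by
    rw [hy'def, Function.update_of_ne huv, Function.update_self]
  have hy'v : y' v = 0 := by rw [hy'def, Function.update_self]
  have hy'w : ∀ w, w ≠ u → w ≠ v → y' w = y w := fun w h1 h2 => by
    rw [hy'def, Function.update_of_ne h2, Function.update_of_ne h1]
  have hsplit1 := sum_split_uv E u v (fun e => ∏ w ∈ e, y w)
  have hsplit2 := sum_split_uv E u v (fun e => ∏ w ∈ e, y' w)
  rw [show (∑ e ∈ E, ∏ w ∈ e, y w) = E.sum (fun e => ∏ w ∈ e, y w) from rfl,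
    show (∑ e ∈ E, ∏ w ∈ e, y' w) = E.sum (fun e => ∏ w ∈ e, y' w) from rfl,
    hsplit1, hsplit2]
  have hempty : E.filter (fun e => u ∈ e ∧ v ∈ e) = ∅ :=
    Finset.filter_eq_empty_iff.2 fun {e} he => hcov e he
  have hextract : ∀ (z : Fin n → ℝ), (∀ w, w ≠ u → w ≠ v → z w = y w) →
      ∀ (𝒜 : Finset (Finset (Fin n))) (a : Fin n),
      (∀ A ∈ 𝒜, a ∈ A ∧ (∀ w ∈ A.erase a, w ≠ u ∧ w ≠ v)) →
      𝒜.sum (fun A => ∏ w ∈ A, z w) = z a * ∑ A ∈ 𝒜, ∏ w ∈ A.erase a, y w := by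
    intro z hz 𝒜 a h
    rw [Finset.mul_sum]
    apply Finset.sum_congr rfl
    intro A hA
    rw [← Finset.mul_prod_erase A z (h A hA).1]
    congr 1
    apply Finset.prod_congr rfl
    intro w hw
    exact hz w ((h A hA).2 w hw).1 ((h A hA).2 w hw).2
  have hcondu : ∀ e ∈ E.filter (fun e => u ∈ e ∧ v ∉ e),
      u ∈ e ∧ (∀ w ∈ e.erase u, w ≠ u ∧ w ≠ v) := by
    intro e he
    have h1 := (Finset.mem_filter.1 he).2
    refine ⟨h1.1, fun w hw => ⟨(Finset.mem_erase.1 hw).1, ?_⟩⟩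
    intro hwv
    exact h1.2 (hwv ▸ (Finset.mem_erase.1 hw).2)
  have hcondv : ∀ e ∈ E.filter (fun e => u ∉ e ∧ v ∈ e),
      v ∈ e ∧ (∀ w ∈ e.erase v, w ≠ u ∧ w ≠ v) := by
    intro e he
    have h1 := (Finset.mem_filter.1 he).2
    refine ⟨h1.2, fun w hw => ⟨?_, (Finset.mem_erase.1 hw).1⟩⟩
    intro hwu
    exact h1.1 (hwu ▸ (Finset.mem_erase.1 hw).2)
  have hyy : ∀ w, w ≠ u → w ≠ v → y w = y w := fun _ _ _ => rfl
  have hu1 := hextract y hyy _ u hcondu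
  have hu2 := hextract y' hy'w _ u hcondu
  have hv1 := hextract y hyy _ v hcondv
  have hv2 := hextract y' hy'w _ v hcondv
  have ho : (E.filter (fun e => u ∉ e ∧ v ∉ e)).sum (fun e => ∏ w ∈ e, y' w)
      = (E.filter (fun e => u ∉ e ∧ v ∉ e)).sum (fun e => ∏ w ∈ e, y w) := by
    apply Finset.sum_congr rfl
    intro e he
    have h1 := (Finset.mem_filter.1 he).2
    exact Finset.prod_congr rfl fun w hw =>
      hy'w w (fun h => h1.1 (h ▸ hw)) (fun h => h1.2 (h ▸ hw))
  rw [hempty, hu1, hu2, hv1, hv2, ho, hy'u, hy'v]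
  simp only [Finset.sum_empty]
  have hyv : 0 ≤ y v := h0 v
  nlinarith [mul_le_mul_of_nonneg_left hAB hyv]

end AuxLemmas


private lemma key_bound (k r : ℕ) {n : ℕ} (E : Finset (Finset (Fin n)))
    (hunif : ∀ e ∈ E, e.card = r) (hfree : ¬ ContainsKFam (k + 1) E) :
    ∀ s : ℕ, ∀ y : Fin n → ℝ, (∀ i, 0 ≤ y i) → (∑ i, y i) = 1 →
      (Finset.univ.filter fun i => y i ≠ 0).card ≤ s →
      (Nat.factorial r : ℝ) * ∑ e ∈ E, ∏ w ∈ e, y w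
        ≤ (Nat.descFactorial k r : ℝ) / (k : ℝ) ^ r := by
  classical
  intro s
  induction s with
  | zero =>
    intro y h0 h1 hcard
    exact small_bound k r E hunif y h0 h1 (le_trans hcard (Nat.zero_le k))
  | succ s ih =>
    intro y h0 h1 hcard
    by_cases hS : (Finset.univ.filter fun i => y i ≠ 0).card ≤ k
    · exact small_bound k r E hunif y h0 h1 hS
    · push_neg at hS
      set S := Finset.univ.filter (fun i => y i ≠ 0) with hSdef
      have huncov : ∃ u ∈ S, ∃ v ∈ S, u ≠ v ∧ ∀ e ∈ E, ¬(u ∈ e ∧ v ∈ e) := by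
        by_contra hcon
        push_neg at hcon
        obtain ⟨C, hCsub, hCcard⟩ := Finset.exists_subset_card_eq (show k + 1 ≤ S.card by omega)
        exact hfree ⟨C, hCcard, fun u hu v hv huv =>
          hcon u (hCsub hu) v (hCsub hv) huv⟩
      obtain ⟨u, hu, v, hv, huv, hcov⟩ := huncov
      have main : ∀ a b : Fin n, a ∈ S → b ∈ S → a ≠ b →
          (∀ e ∈ E, ¬(a ∈ e ∧ b ∈ e)) →
          (∑ e ∈ E.filter (fun e => a ∉ e ∧ b ∈ e), ∏ w ∈ e.erase b, y w
            ≤ ∑ e ∈ E.filter (fun e => a ∈ e ∧ b ∉ e), ∏ w ∈ e.erase a, y w) →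
          (Nat.factorial r : ℝ) * ∑ e ∈ E, ∏ w ∈ e, y w
            ≤ (Nat.descFactorial k r : ℝ) / (k : ℝ) ^ r := by
        intro a b ha hb hab hcov' hAB
        set y' : Fin n → ℝ := Function.update (Function.update y a (y a + y b)) b 0
          with hy'def
        have hy'a : y' a = y a + y b := by
          rw [hy'def, Function.update_of_ne hab, Function.update_self]
        have hy'b : y' b = 0 := by rw [hy'def, Function.update_self]
        have hy'w : ∀ w, w ≠ a → w ≠ b → y' w = y w := fun w h1' h2' => by
          rw [hy'def, Function.update_of_ne h2', Function.update_of_ne h1']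
        have h0' : ∀ i, 0 ≤ y' i := by
          intro i
          by_cases h1' : i = b
          · rw [h1', hy'b]
          · by_cases h2' : i = a
            · rw [h2', hy'a]; have := h0 a; have := h0 b; linarith
            · rw [hy'w i h2' h1']; exact h0 i
        have h1' : ∑ i, y' i = 1 := by
          have hbu : b ∈ (Finset.univ : Finset (Fin n)).erase a :=
            Finset.mem_erase.2 ⟨Ne.symm hab, Finset.mem_univ b⟩
          rw [← Finset.add_sum_erase Finset.univ y' (Finset.mem_univ a),
            ← Finset.add_sum_erase _ y' hbu]
          rw [← Finset.add_sum_erase Finset.univ y (Finset.mem_univ a),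
            ← Finset.add_sum_erase _ y hbu] at h1
          have htail : ∑ i ∈ (Finset.univ.erase a).erase b, y' i
              = ∑ i ∈ (Finset.univ.erase a).erase b, y i := by
            apply Finset.sum_congr rfl
            intro i hi
            have h2 := Finset.mem_erase.1 hi
            have h3 := Finset.mem_erase.1 h2.2
            exact hy'w i h3.1 h2.1
          rw [htail, hy'a, hy'b]
          linarith [h1]
        have hsupp : (Finset.univ.filter fun i => y' i ≠ 0) ⊆ S.erase b := by
          intro i hi
          have h2 := (Finset.mem_filter.1 hi).2
          have hib : i ≠ b := by
            intro h; rw [h, hy'b] at h2; exact h2 rfl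
          refine Finset.mem_erase.2 ⟨hib, ?_⟩
          by_cases hia : i = a
          · rw [hia]; exact ha
          · rw [hy'w i hia hib] at h2
            exact Finset.mem_filter.2 ⟨Finset.mem_univ i, h2⟩
        have hcard' : (Finset.univ.filter fun i => y' i ≠ 0).card ≤ s := by
          have h2 : (Finset.univ.filter fun i => y' i ≠ 0).card ≤ (S.erase b).card :=
            Finset.card_le_card hsupp
          have h3 : (S.erase b).card = S.card - 1 := Finset.card_erase_of_mem hb
          have h4 : S.card ≤ s + 1 := hcard
          omega
        have hcomp := compress_le E hab hcov' y h0 hAB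
        calc (Nat.factorial r : ℝ) * ∑ e ∈ E, ∏ w ∈ e, y w
            ≤ (Nat.factorial r : ℝ) * ∑ e ∈ E, ∏ w ∈ e, y' w := by
              apply mul_le_mul_of_nonneg_left hcomp (by positivity)
          _ ≤ (Nat.descFactorial k r : ℝ) / (k : ℝ) ^ r := ih y' h0' h1' hcard'
      rcases le_total
          (∑ e ∈ E.filter (fun e => u ∉ e ∧ v ∈ e), ∏ w ∈ e.erase v, y w)
          (∑ e ∈ E.filter (fun e => u ∈ e ∧ v ∉ e), ∏ w ∈ e.erase u, y w) with hAB | hAB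
      · exact main u v hu hv huv hcov hAB
      · refine main v u hv hu (Ne.symm huv) (fun e he h => hcov e he ⟨h.2, h.1⟩) ?_
        have e1 : E.filter (fun e => v ∉ e ∧ u ∈ e) = E.filter (fun e => u ∈ e ∧ v ∉ e) := by
          apply Finset.filter_congr
          intro e _
          constructor
          · rintro ⟨h1', h2'⟩; exact ⟨h2', h1'⟩
          · rintro ⟨h1', h2'⟩; exact ⟨h2', h1'⟩
        have e2 : E.filter (fun e => v ∈ e ∧ u ∉ e) = E.filter (fun e => u ∉ e ∧ v ∈ e) := by
          apply Finset.filter_congr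
          intro e _
          constructor
          · rintro ⟨h1', h2'⟩; exact ⟨h2', h1'⟩
          · rintro ⟨h1', h2'⟩; exact ⟨h2', h1'⟩
        rw [e1, e2]
        exact hAB

/-- Corollary 3.6: for `k ≥ r ≥ 2`, every `𝒦_{k+1}^{(r)}`-free `r`-graph `H`
satisfies `λ^(1)(H) ≤ (k)_r / k^r`; hence `π_λ(𝒦_{k+1}^{(r)}) ≤ (k)_r / k^r`. -/
theorem lagrangian_KFam_free (k r : ℕ) (hr : 2 ≤ r) (hrk : r ≤ k)
    (n : ℕ) (E : Finset (Finset (Fin n))) (hunif : ∀ e ∈ E, e.card = r)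
    (hfree : ¬ ContainsKFam (k + 1) E) :
    specRad r n E 1 ≤ (Nat.descFactorial k r : ℝ) / (k : ℝ) ^ r := by
  classical
  have hB : (0 : ℝ) ≤ (Nat.descFactorial k r : ℝ) / (k : ℝ) ^ r := by positivity
  apply Real.sSup_le _ hB
  rintro z ⟨x, hx, rfl⟩
  have hx' : ∑ i, |x i| = 1 := by
    rw [← hx]
    exact Finset.sum_congr rfl fun i _ => (Real.rpow_one _).symm
  have step1 : (Nat.factorial r : ℝ) * ∑ e ∈ E, ∏ v ∈ e, x v
      ≤ (Nat.factorial r : ℝ) * ∑ e ∈ E, ∏ v ∈ e, |x v| := by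
    apply mul_le_mul_of_nonneg_left _ (by positivity)
    apply Finset.sum_le_sum
    intro e _
    calc ∏ v ∈ e, x v ≤ |∏ v ∈ e, x v| := le_abs_self _
      _ = ∏ v ∈ e, |x v| := Finset.abs_prod e x
  refine le_trans step1 ?_
  exact key_bound k r E hunif hfree
    ((Finset.univ.filter fun i => |x i| ≠ 0).card)
    (fun i => |x i|) (fun i => abs_nonneg (x i)) hx' le_rfl
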